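/- (H²-Korn inequality.) For every smooth compactly supported vector field v = (v₁,v₂) ∈ C_c^∞(ℝ², ℝ²), ∫_{ℝ²} |ε(v)|² dx + ∫_{ℝ²} |∇ε(v)|² dx ≥ (1 − 1/√2) ( ∫_{ℝ²} |∇v|² dx + ∫_{ℝ²} |∇²v|² dx ). -/

import Mathlib

open MeasureTheory

/-- First partial derivative `∂₁ f` of `f : ℝ² → ℝ`. -/
noncomputable def pd1 (f : ℝ × ℝ → ℝ) : ℝ × ℝ → ℝ := fun x => fderiv ℝ f x (1, 0)

/-- Second partial derivative `∂₂ f` of `f : ℝ² → ℝ`. -/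
noncomputable def pd2 (f : ℝ × ℝ → ℝ) : ℝ × ℝ → ℝ := fun x => fderiv ℝ f x (0, 1)

section Aux

variable {f g h u w : ℝ × ℝ → ℝ}

lemma contDiff_pd1 (hf : ContDiff ℝ (⊤ : ℕ∞) f) : ContDiff ℝ (⊤ : ℕ∞) (pd1 f) := by
  have h1 : ContDiff ℝ (⊤ : ℕ∞) (fderiv ℝ f) := hf.fderiv_right (by exact_mod_cast le_top)
  exact h1.clm_apply contDiff_const

lemma contDiff_pd2 (hf : ContDiff ℝ (⊤ : ℕ∞) f) : ContDiff ℝ (⊤ : ℕ∞) (pd2 f) := by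
  have h1 : ContDiff ℝ (⊤ : ℕ∞) (fderiv ℝ f) := hf.fderiv_right (by exact_mod_cast le_top)
  exact h1.clm_apply contDiff_const

lemma hcs_pd1 (hc : HasCompactSupport f) : HasCompactSupport (pd1 f) := by
  have := (hc.fderiv ℝ).comp_left (g := fun L : (ℝ × ℝ) →L[ℝ] ℝ => L (1, 0)) rfl
  exact this

lemma hcs_pd2 (hc : HasCompactSupport f) : HasCompactSupport (pd2 f) := by
  have := (hc.fderiv ℝ).comp_left (g := fun L : (ℝ × ℝ) →L[ℝ] ℝ => L (0, 1)) rfl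
  exact this

lemma pd_comm (hg : ContDiff ℝ (⊤ : ℕ∞) g) (x : ℝ × ℝ) : pd2 (pd1 g) x = pd1 (pd2 g) x := by
  have hd : DifferentiableAt ℝ (fderiv ℝ g) x := by
    have h1 : ContDiff ℝ (⊤ : ℕ∞) (fderiv ℝ g) := hg.fderiv_right (by exact_mod_cast le_top)
    exact (h1.differentiable (by simp)).differentiableAt
  have key : ∀ v w : ℝ × ℝ, fderiv ℝ (fun y => fderiv ℝ g y v) x w
      = fderiv ℝ (fderiv ℝ g) x w v := by
    intro v w
    rw [fderiv_clm_apply hd (differentiableAt_const v)]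
    simp
  have hsym : IsSymmSndFDerivAt ℝ g x :=
    hg.contDiffAt.isSymmSndFDerivAt (by simp only [minSmoothness_of_isRCLikeNormedField]; exact WithTop.coe_le_coe.2 (le_top : (2 : ℕ∞) ≤ ⊤))
  show fderiv ℝ (fun y => fderiv ℝ g y (1, 0)) x (0, 1)
      = fderiv ℝ (fun y => fderiv ℝ g y (0, 1)) x (1, 0)
  rw [key, key, hsym]

lemma intmul (hu : Continuous u) (hw : Continuous w) (hc : HasCompactSupport u) :
    Integrable (fun x => u x * w x) := by
  simpa [Pi.mul_def] using (hu.mul hw).integrable_of_hasCompactSupport hc.mul_right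

lemma intadd {u w : ℝ × ℝ → ℝ} (hu : Integrable u) (hw : Integrable w) :
    Integrable (fun x => u x + w x) := hu.add hw

lemma intcmul {u : ℝ × ℝ → ℝ} (c : ℝ) (hu : Integrable u) :
    Integrable (fun x => c * u x) := hu.const_mul c

lemma intsq (hu : Continuous u) (hc : HasCompactSupport u) :
    Integrable (fun x => u x ^ 2) := by
  simpa [pow_two] using intmul hu hu hc

lemma slice_hcs (hc : HasCompactSupport h) (a : ℝ) :
    HasCompactSupport (fun y => h (a, y)) := by
  apply HasCompactSupport.intro (hc.image continuous_snd)
  intro y hy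
  by_contra h0
  exact hy ⟨(a, y), subset_tsupport _ h0, rfl⟩

lemma slice_hcs' (hc : HasCompactSupport h) (b : ℝ) :
    HasCompactSupport (fun x => h (x, b)) := by
  apply HasCompactSupport.intro (hc.image continuous_fst)
  intro y hy
  by_contra h0
  exact hy ⟨(y, b), subset_tsupport _ h0, rfl⟩

lemma integral_pd2_eq_zero (hh : ContDiff ℝ (⊤ : ℕ∞) h) (hch : HasCompactSupport h) :
    ∫ x : ℝ × ℝ, pd2 h x = 0 := by
  have hcont : Continuous (pd2 h) := (contDiff_pd2 hh).continuous
  have hint : Integrable (pd2 h) := hcont.integrable_of_hasCompactSupport (hcs_pd2 hch)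
  rw [Measure.volume_eq_prod] at hint ⊢
  rw [integral_prod _ hint]
  have hz : ∀ a : ℝ, (∫ y : ℝ, pd2 h (a, y)) = 0 := by
    intro a
    apply integral_eq_zero_of_hasDerivAt_of_integrable (f := fun y => h (a, y))
    · intro y
      have hd : HasFDerivAt h (fderiv ℝ h (a, y)) (a, y) :=
        ((hh.differentiable (by simp)) (a, y)).hasFDerivAt
      have hline : HasDerivAt (fun t : ℝ => ((a : ℝ), t)) (((0 : ℝ), (1 : ℝ))) y :=
        HasDerivAt.prodMk (hasDerivAt_const y a) (hasDerivAt_id y)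
      exact hd.comp_hasDerivAt y hline
    · exact (hcont.comp (by fun_prop)).integrable_of_hasCompactSupport
        (slice_hcs (hcs_pd2 hch) a)
    · exact (hh.continuous.comp (by fun_prop)).integrable_of_hasCompactSupport
        (slice_hcs hch a)
  simp [hz]

lemma integral_pd1_eq_zero (hh : ContDiff ℝ (⊤ : ℕ∞) h) (hch : HasCompactSupport h) :
    ∫ x : ℝ × ℝ, pd1 h x = 0 := by
  have hcont : Continuous (pd1 h) := (contDiff_pd1 hh).continuous
  have hint : Integrable (pd1 h) := hcont.integrable_of_hasCompactSupport (hcs_pd1 hch)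
  rw [Measure.volume_eq_prod] at hint ⊢
  rw [integral_prod _ hint, integral_integral_swap (by exact hint)]
  have hz : ∀ b : ℝ, (∫ x : ℝ, pd1 h (x, b)) = 0 := by
    intro b
    apply integral_eq_zero_of_hasDerivAt_of_integrable (f := fun x => h (x, b))
    · intro y
      have hd : HasFDerivAt h (fderiv ℝ h (y, b)) (y, b) :=
        ((hh.differentiable (by simp)) (y, b)).hasFDerivAt
      have hline : HasDerivAt (fun t : ℝ => (t, (b : ℝ))) (((1 : ℝ), (0 : ℝ))) y :=
        HasDerivAt.prodMk (hasDerivAt_id y) (hasDerivAt_const y b)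
      exact hd.comp_hasDerivAt y hline
    · exact (hcont.comp (by fun_prop)).integrable_of_hasCompactSupport
        (slice_hcs' (hcs_pd1 hch) b)
    · exact (hh.continuous.comp (by fun_prop)).integrable_of_hasCompactSupport
        (slice_hcs' hch b)
  simp [hz]

lemma ibp (hf : ContDiff ℝ (⊤ : ℕ∞) f) (hg : ContDiff ℝ (⊤ : ℕ∞) g)
    (hcf : HasCompactSupport f) (hcg : HasCompactSupport g) :
    ∫ x : ℝ × ℝ, pd2 f x * pd1 g x = ∫ x : ℝ × ℝ, pd1 f x * pd2 g x := by
  have hdf : Differentiable ℝ f := hf.differentiable (by simp)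
  have hdg1 : Differentiable ℝ (pd1 g) :=
    (contDiff_pd1 hg).differentiable (by simp)
  have hdg2 : Differentiable ℝ (pd2 g) :=
    (contDiff_pd2 hg).differentiable (by simp)
  -- product rules
  have e2 : ∀ x, pd2 (fun y => f y * pd1 g y) x
      = pd2 f x * pd1 g x + f x * pd1 (pd2 g) x := by
    intro x
    show fderiv ℝ (fun y => f y * pd1 g y) x (0, 1) = _
    rw [fderiv_fun_mul (hdf x) (hdg1 x)]
    have := pd_comm hg x
    simp only [ContinuousLinearMap.add_apply, ContinuousLinearMap.smul_apply, smul_eq_mul]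
    rw [show fderiv ℝ (pd1 g) x (0, 1) = pd2 (pd1 g) x from rfl, pd_comm hg x]
    show f x * pd1 (pd2 g) x + pd1 g x * pd2 f x = _
    ring
  have e1 : ∀ x, pd1 (fun y => f y * pd2 g y) x
      = pd1 f x * pd2 g x + f x * pd1 (pd2 g) x := by
    intro x
    show fderiv ℝ (fun y => f y * pd2 g y) x (1, 0) = _
    rw [fderiv_fun_mul (hdf x) (hdg2 x)]
    simp only [ContinuousLinearMap.add_apply, ContinuousLinearMap.smul_apply, smul_eq_mul]
    show f x * pd1 (pd2 g) x + pd2 g x * pd1 f x = _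
    ring
  have key2 : ∫ x : ℝ × ℝ, pd2 (fun y => f y * pd1 g y) x = 0 :=
    integral_pd2_eq_zero (hf.mul (contDiff_pd1 hg))
      (by simpa [Pi.mul_def] using hcf.mul_right (f' := pd1 g))
  have key1 : ∫ x : ℝ × ℝ, pd1 (fun y => f y * pd2 g y) x = 0 :=
    integral_pd1_eq_zero (hf.mul (contDiff_pd2 hg))
      (by simpa [Pi.mul_def] using hcf.mul_right (f' := pd2 g))
  have I1 : Integrable (fun x : ℝ × ℝ => pd2 f x * pd1 g x) :=
    intmul (contDiff_pd2 hf).continuous hdg1.continuous (hcs_pd2 hcf)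
  have I2 : Integrable (fun x : ℝ × ℝ => f x * pd1 (pd2 g) x) :=
    intmul hf.continuous (contDiff_pd1 (contDiff_pd2 hg)).continuous hcf
  have I3 : Integrable (fun x : ℝ × ℝ => pd1 f x * pd2 g x) :=
    intmul (contDiff_pd1 hf).continuous hdg2.continuous (hcs_pd1 hcf)
  have E2 : ∫ x : ℝ × ℝ, (pd2 f x * pd1 g x + f x * pd1 (pd2 g) x) = 0 := by
    rw [← key2]; exact integral_congr_ae (Filter.Eventually.of_forall fun x => (e2 x).symm)
  have E1 : ∫ x : ℝ × ℝ, (pd1 f x * pd2 g x + f x * pd1 (pd2 g) x) = 0 := by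
    rw [← key1]; exact integral_congr_ae (Filter.Eventually.of_forall fun x => (e1 x).symm)
  rw [integral_add I1 I2] at E2
  rw [integral_add I3 I2] at E1
  linarith

end Aux

/-- Squared Frobenius norm of the symmetric gradient (linearized strain):
`|ε(v)|² = |∂₁v₁|² + |∂₂v₂|² + (1/2)|∂₂v₁ + ∂₁v₂|²`. -/
noncomputable def epsSq (v1 v2 : ℝ × ℝ → ℝ) (x : ℝ × ℝ) : ℝ :=
  (pd1 v1 x) ^ 2 + (pd2 v2 x) ^ 2 + (1 / 2) * (pd2 v1 x + pd1 v2 x) ^ 2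

/-- Squared gradient norm `|∇v|² = Σ_{i,j} |∂_j v_i|²`. -/
noncomputable def gradSq (v1 v2 : ℝ × ℝ → ℝ) (x : ℝ × ℝ) : ℝ :=
  (pd1 v1 x) ^ 2 + (pd2 v1 x) ^ 2 + (pd1 v2 x) ^ 2 + (pd2 v2 x) ^ 2

/-- Squared Frobenius norm of the strain gradient `|∇ε(v)|²`. -/
noncomputable def gradEpsSq (v1 v2 : ℝ × ℝ → ℝ) (x : ℝ × ℝ) : ℝ :=
  (pd1 (pd1 v1) x) ^ 2 + (pd1 (pd2 v1) x) ^ 2 + (pd1 (pd2 v2) x) ^ 2 + (pd2 (pd2 v2) x) ^ 2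
    + (1 / 2) * (pd1 (pd2 v1) x + pd1 (pd1 v2) x) ^ 2
    + (1 / 2) * (pd1 (pd2 v2) x + pd2 (pd2 v1) x) ^ 2

/-- Squared Hessian norm `|∇²v|²`, each distinct second derivative counted once. -/
noncomputable def hessSq (v1 v2 : ℝ × ℝ → ℝ) (x : ℝ × ℝ) : ℝ :=
  (pd1 (pd1 v1) x) ^ 2 + (pd1 (pd2 v1) x) ^ 2 + (pd2 (pd2 v1) x) ^ 2
    + (pd1 (pd1 v2) x) ^ 2 + (pd1 (pd2 v2) x) ^ 2 + (pd2 (pd2 v2) x) ^ 2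

/-- H²-Korn inequality: for every smooth compactly supported vector field
`v = (v₁,v₂) ∈ C_c^∞(ℝ², ℝ²)`,
`∫ |ε(v)|² + ∫ |∇ε(v)|² ≥ (1 − 1/√2) (∫ |∇v|² + ∫ |∇²v|²)`. -/
theorem h2_korn_inequality (v1 v2 : ℝ × ℝ → ℝ)
    (h1 : ContDiff ℝ (⊤ : ℕ∞) v1) (h2 : ContDiff ℝ (⊤ : ℕ∞) v2)
    (hc1 : HasCompactSupport v1) (hc2 : HasCompactSupport v2) :
    (∫ x : ℝ × ℝ, epsSq v1 v2 x) + ∫ x : ℝ × ℝ, gradEpsSq v1 v2 x ≥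
      (1 - 1 / Real.sqrt 2) *
        ((∫ x : ℝ × ℝ, gradSq v1 v2 x) + ∫ x : ℝ × ℝ, hessSq v1 v2 x) := by
  -- smoothness of atoms
  have sa : ContDiff ℝ (⊤ : ℕ∞) (pd1 v1) := contDiff_pd1 h1
  have sc : ContDiff ℝ (⊤ : ℕ∞) (pd2 v1) := contDiff_pd2 h1
  have sd : ContDiff ℝ (⊤ : ℕ∞) (pd1 v2) := contDiff_pd1 h2
  have sb : ContDiff ℝ (⊤ : ℕ∞) (pd2 v2) := contDiff_pd2 h2
  have sp : ContDiff ℝ (⊤ : ℕ∞) (pd1 (pd1 v1)) := contDiff_pd1 sa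
  have sq' : ContDiff ℝ (⊤ : ℕ∞) (pd1 (pd2 v1)) := contDiff_pd1 sc
  have sr : ContDiff ℝ (⊤ : ℕ∞) (pd2 (pd2 v1)) := contDiff_pd2 sc
  have sP : ContDiff ℝ (⊤ : ℕ∞) (pd1 (pd1 v2)) := contDiff_pd1 sd
  have sQ : ContDiff ℝ (⊤ : ℕ∞) (pd1 (pd2 v2)) := contDiff_pd1 sb
  have sR : ContDiff ℝ (⊤ : ℕ∞) (pd2 (pd2 v2)) := contDiff_pd2 sb
  -- compact supports
  have ka : HasCompactSupport (pd1 v1) := hcs_pd1 hc1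
  have kc : HasCompactSupport (pd2 v1) := hcs_pd2 hc1
  have kd : HasCompactSupport (pd1 v2) := hcs_pd1 hc2
  have kb : HasCompactSupport (pd2 v2) := hcs_pd2 hc2
  have kp : HasCompactSupport (pd1 (pd1 v1)) := hcs_pd1 ka
  have kq : HasCompactSupport (pd1 (pd2 v1)) := hcs_pd1 kc
  have kr : HasCompactSupport (pd2 (pd2 v1)) := hcs_pd2 kc
  have kP : HasCompactSupport (pd1 (pd1 v2)) := hcs_pd1 kd
  have kQ : HasCompactSupport (pd1 (pd2 v2)) := hcs_pd1 kb
  have kR : HasCompactSupport (pd2 (pd2 v2)) := hcs_pd2 kb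
  -- integrability of squares
  have Ia : Integrable (fun x : ℝ × ℝ => pd1 v1 x ^ 2) := intsq sa.continuous ka
  have Ic : Integrable (fun x : ℝ × ℝ => pd2 v1 x ^ 2) := intsq sc.continuous kc
  have Id : Integrable (fun x : ℝ × ℝ => pd1 v2 x ^ 2) := intsq sd.continuous kd
  have Ib : Integrable (fun x : ℝ × ℝ => pd2 v2 x ^ 2) := intsq sb.continuous kb
  have Ip : Integrable (fun x : ℝ × ℝ => pd1 (pd1 v1) x ^ 2) := intsq sp.continuous kp
  have Iq : Integrable (fun x : ℝ × ℝ => pd1 (pd2 v1) x ^ 2) := intsq sq'.continuous kq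
  have Ir : Integrable (fun x : ℝ × ℝ => pd2 (pd2 v1) x ^ 2) := intsq sr.continuous kr
  have IP : Integrable (fun x : ℝ × ℝ => pd1 (pd1 v2) x ^ 2) := intsq sP.continuous kP
  have IQ : Integrable (fun x : ℝ × ℝ => pd1 (pd2 v2) x ^ 2) := intsq sQ.continuous kQ
  have IR : Integrable (fun x : ℝ × ℝ => pd2 (pd2 v2) x ^ 2) := intsq sR.continuous kR
  -- integrability of cross terms
  have Icd : Integrable (fun x : ℝ × ℝ => pd2 v1 x * pd1 v2 x) :=
    intmul sc.continuous sd.continuous kc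
  have Iab : Integrable (fun x : ℝ × ℝ => pd1 v1 x * pd2 v2 x) :=
    intmul sa.continuous sb.continuous ka
  have IqP : Integrable (fun x : ℝ × ℝ => pd1 (pd2 v1) x * pd1 (pd1 v2) x) :=
    intmul sq'.continuous sP.continuous kq
  have IpQ : Integrable (fun x : ℝ × ℝ => pd1 (pd1 v1) x * pd1 (pd2 v2) x) :=
    intmul sp.continuous sQ.continuous kp
  have IrQ : Integrable (fun x : ℝ × ℝ => pd2 (pd2 v1) x * pd1 (pd2 v2) x) :=
    intmul sr.continuous sQ.continuous kr
  have IqR : Integrable (fun x : ℝ × ℝ => pd1 (pd2 v1) x * pd2 (pd2 v2) x) :=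
    intmul sq'.continuous sR.continuous kq
  -- integration by parts identities
  have R1 : ∫ x : ℝ × ℝ, pd2 v1 x * pd1 v2 x = ∫ x : ℝ × ℝ, pd1 v1 x * pd2 v2 x :=
    ibp h1 h2 hc1 hc2
  have R2 : ∫ x : ℝ × ℝ, pd1 (pd2 v1) x * pd1 (pd1 v2) x
      = ∫ x : ℝ × ℝ, pd1 (pd1 v1) x * pd1 (pd2 v2) x := by
    have h := ibp sa sd ka kd
    calc ∫ x : ℝ × ℝ, pd1 (pd2 v1) x * pd1 (pd1 v2) x
        = ∫ x : ℝ × ℝ, pd2 (pd1 v1) x * pd1 (pd1 v2) x :=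
          integral_congr_ae (Filter.Eventually.of_forall fun x =>
            show pd1 (pd2 v1) x * pd1 (pd1 v2) x = pd2 (pd1 v1) x * pd1 (pd1 v2) x by
              rw [pd_comm h1 x])
      _ = ∫ x : ℝ × ℝ, pd1 (pd1 v1) x * pd2 (pd1 v2) x := h
      _ = ∫ x : ℝ × ℝ, pd1 (pd1 v1) x * pd1 (pd2 v2) x :=
          integral_congr_ae (Filter.Eventually.of_forall fun x =>
            show pd1 (pd1 v1) x * pd2 (pd1 v2) x = pd1 (pd1 v1) x * pd1 (pd2 v2) x by
              rw [pd_comm h2 x])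
  have R3 : ∫ x : ℝ × ℝ, pd2 (pd2 v1) x * pd1 (pd2 v2) x
      = ∫ x : ℝ × ℝ, pd1 (pd2 v1) x * pd2 (pd2 v2) x := ibp sc sb kc kb
  -- nonnegativity of atom square integrals
  have nna : 0 ≤ ∫ x : ℝ × ℝ, pd1 v1 x ^ 2 := integral_nonneg fun x => sq_nonneg _
  have nnc : 0 ≤ ∫ x : ℝ × ℝ, pd2 v1 x ^ 2 := integral_nonneg fun x => sq_nonneg _
  have nnd : 0 ≤ ∫ x : ℝ × ℝ, pd1 v2 x ^ 2 := integral_nonneg fun x => sq_nonneg _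
  have nnb : 0 ≤ ∫ x : ℝ × ℝ, pd2 v2 x ^ 2 := integral_nonneg fun x => sq_nonneg _
  have nnp : 0 ≤ ∫ x : ℝ × ℝ, pd1 (pd1 v1) x ^ 2 := integral_nonneg fun x => sq_nonneg _
  have nnq : 0 ≤ ∫ x : ℝ × ℝ, pd1 (pd2 v1) x ^ 2 := integral_nonneg fun x => sq_nonneg _
  have nnr : 0 ≤ ∫ x : ℝ × ℝ, pd2 (pd2 v1) x ^ 2 := integral_nonneg fun x => sq_nonneg _
  have nnP : 0 ≤ ∫ x : ℝ × ℝ, pd1 (pd1 v2) x ^ 2 := integral_nonneg fun x => sq_nonneg _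
  have nnQ : 0 ≤ ∫ x : ℝ × ℝ, pd1 (pd2 v2) x ^ 2 := integral_nonneg fun x => sq_nonneg _
  have nnR : 0 ≤ ∫ x : ℝ × ℝ, pd2 (pd2 v2) x ^ 2 := integral_nonneg fun x => sq_nonneg _
  -- nonnegativity of squares of sums, expanded
  have N1 : 0 ≤ (∫ x : ℝ × ℝ, pd1 v1 x ^ 2) + (∫ x : ℝ × ℝ, pd2 v2 x ^ 2)
      + 2 * ∫ x : ℝ × ℝ, pd1 v1 x * pd2 v2 x := by
    have h0 : 0 ≤ ∫ x : ℝ × ℝ, (pd1 v1 x + pd2 v2 x) ^ 2 :=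
      integral_nonneg fun x => sq_nonneg _
    have e : ∀ x : ℝ × ℝ, (pd1 v1 x + pd2 v2 x) ^ 2
        = pd1 v1 x ^ 2 + pd2 v2 x ^ 2 + 2 * (pd1 v1 x * pd2 v2 x) := fun x => by ring
    rw [integral_congr_ae (Filter.Eventually.of_forall e),
      integral_add (intadd Ia Ib) (intcmul 2 Iab), integral_add Ia Ib,
      integral_const_mul] at h0
    linarith
  have N3 : 0 ≤ (∫ x : ℝ × ℝ, pd1 (pd1 v1) x ^ 2) + (∫ x : ℝ × ℝ, pd1 (pd2 v2) x ^ 2)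
      + 2 * ∫ x : ℝ × ℝ, pd1 (pd1 v1) x * pd1 (pd2 v2) x := by
    have h0 : 0 ≤ ∫ x : ℝ × ℝ, (pd1 (pd1 v1) x + pd1 (pd2 v2) x) ^ 2 :=
      integral_nonneg fun x => sq_nonneg _
    have e : ∀ x : ℝ × ℝ, (pd1 (pd1 v1) x + pd1 (pd2 v2) x) ^ 2
        = pd1 (pd1 v1) x ^ 2 + pd1 (pd2 v2) x ^ 2
          + 2 * (pd1 (pd1 v1) x * pd1 (pd2 v2) x) := fun x => by ring
    rw [integral_congr_ae (Filter.Eventually.of_forall e),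
      integral_add (intadd Ip IQ) (intcmul 2 IpQ), integral_add Ip IQ,
      integral_const_mul] at h0
    linarith
  have N4 : 0 ≤ (∫ x : ℝ × ℝ, pd1 (pd2 v1) x ^ 2) + (∫ x : ℝ × ℝ, pd2 (pd2 v2) x ^ 2)
      + 2 * ∫ x : ℝ × ℝ, pd1 (pd2 v1) x * pd2 (pd2 v2) x := by
    have h0 : 0 ≤ ∫ x : ℝ × ℝ, (pd1 (pd2 v1) x + pd2 (pd2 v2) x) ^ 2 :=
      integral_nonneg fun x => sq_nonneg _
    have e : ∀ x : ℝ × ℝ, (pd1 (pd2 v1) x + pd2 (pd2 v2) x) ^ 2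
        = pd1 (pd2 v1) x ^ 2 + pd2 (pd2 v2) x ^ 2
          + 2 * (pd1 (pd2 v1) x * pd2 (pd2 v2) x) := fun x => by ring
    rw [integral_congr_ae (Filter.Eventually.of_forall e),
      integral_add (intadd Iq IR) (intcmul 2 IqR), integral_add Iq IR,
      integral_const_mul] at h0
    linarith
  -- splittings of the four integrals
  have S_eps : (∫ x : ℝ × ℝ, epsSq v1 v2 x)
      = (∫ x : ℝ × ℝ, pd1 v1 x ^ 2) + (∫ x : ℝ × ℝ, pd2 v2 x ^ 2)
        + (1 / 2) * (∫ x : ℝ × ℝ, pd2 v1 x ^ 2) + (1 / 2) * (∫ x : ℝ × ℝ, pd1 v2 x ^ 2)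
        + ∫ x : ℝ × ℝ, pd2 v1 x * pd1 v2 x := by
    have e : ∀ x : ℝ × ℝ, epsSq v1 v2 x
        = pd1 v1 x ^ 2 + pd2 v2 x ^ 2 + (1 / 2) * pd2 v1 x ^ 2 + (1 / 2) * pd1 v2 x ^ 2
          + pd2 v1 x * pd1 v2 x := fun x => by simp only [epsSq]; ring
    rw [integral_congr_ae (Filter.Eventually.of_forall e),
      integral_add (intadd (intadd (intadd Ia Ib) (intcmul _ Ic)) (intcmul _ Id)) Icd,
      integral_add (intadd (intadd Ia Ib) (intcmul _ Ic)) (intcmul _ Id),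
      integral_add (intadd Ia Ib) (intcmul _ Ic),
      integral_add Ia Ib, integral_const_mul, integral_const_mul]
  have S_grad : (∫ x : ℝ × ℝ, gradSq v1 v2 x)
      = (∫ x : ℝ × ℝ, pd1 v1 x ^ 2) + (∫ x : ℝ × ℝ, pd2 v1 x ^ 2)
        + (∫ x : ℝ × ℝ, pd1 v2 x ^ 2) + (∫ x : ℝ × ℝ, pd2 v2 x ^ 2) := by
    have e : ∀ x : ℝ × ℝ, gradSq v1 v2 x
        = pd1 v1 x ^ 2 + pd2 v1 x ^ 2 + pd1 v2 x ^ 2 + pd2 v2 x ^ 2 := fun x => rfl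
    rw [integral_congr_ae (Filter.Eventually.of_forall e),
      integral_add (intadd (intadd Ia Ic) Id) Ib, integral_add (intadd Ia Ic) Id, integral_add Ia Ic]
  have S_hess : (∫ x : ℝ × ℝ, hessSq v1 v2 x)
      = (∫ x : ℝ × ℝ, pd1 (pd1 v1) x ^ 2) + (∫ x : ℝ × ℝ, pd1 (pd2 v1) x ^ 2)
        + (∫ x : ℝ × ℝ, pd2 (pd2 v1) x ^ 2) + (∫ x : ℝ × ℝ, pd1 (pd1 v2) x ^ 2)
        + (∫ x : ℝ × ℝ, pd1 (pd2 v2) x ^ 2) + (∫ x : ℝ × ℝ, pd2 (pd2 v2) x ^ 2) := by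
    have e : ∀ x : ℝ × ℝ, hessSq v1 v2 x
        = pd1 (pd1 v1) x ^ 2 + pd1 (pd2 v1) x ^ 2 + pd2 (pd2 v1) x ^ 2
          + pd1 (pd1 v2) x ^ 2 + pd1 (pd2 v2) x ^ 2 + pd2 (pd2 v2) x ^ 2 := fun x => rfl
    rw [integral_congr_ae (Filter.Eventually.of_forall e),
      integral_add (intadd (intadd (intadd (intadd Ip Iq) Ir) IP) IQ) IR,
      integral_add (intadd (intadd (intadd Ip Iq) Ir) IP) IQ,
      integral_add (intadd (intadd Ip Iq) Ir) IP,
      integral_add (intadd Ip Iq) Ir, integral_add Ip Iq]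
  have S_gradEps : (∫ x : ℝ × ℝ, gradEpsSq v1 v2 x)
      = (∫ x : ℝ × ℝ, pd1 (pd1 v1) x ^ 2) + (3 / 2) * (∫ x : ℝ × ℝ, pd1 (pd2 v1) x ^ 2)
        + (3 / 2) * (∫ x : ℝ × ℝ, pd1 (pd2 v2) x ^ 2) + (∫ x : ℝ × ℝ, pd2 (pd2 v2) x ^ 2)
        + (1 / 2) * (∫ x : ℝ × ℝ, pd1 (pd1 v2) x ^ 2)
        + (1 / 2) * (∫ x : ℝ × ℝ, pd2 (pd2 v1) x ^ 2)
        + (∫ x : ℝ × ℝ, pd1 (pd2 v1) x * pd1 (pd1 v2) x)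
        + ∫ x : ℝ × ℝ, pd2 (pd2 v1) x * pd1 (pd2 v2) x := by
    have e : ∀ x : ℝ × ℝ, gradEpsSq v1 v2 x
        = pd1 (pd1 v1) x ^ 2 + (3 / 2) * pd1 (pd2 v1) x ^ 2 + (3 / 2) * pd1 (pd2 v2) x ^ 2
          + pd2 (pd2 v2) x ^ 2 + (1 / 2) * pd1 (pd1 v2) x ^ 2 + (1 / 2) * pd2 (pd2 v1) x ^ 2
          + pd1 (pd2 v1) x * pd1 (pd1 v2) x
          + pd2 (pd2 v1) x * pd1 (pd2 v2) x := fun x => by simp only [gradEpsSq]; ring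
    rw [integral_congr_ae (Filter.Eventually.of_forall e),
      integral_add (intadd (intadd (intadd (intadd (intadd (intadd Ip (intcmul _ Iq))
        (intcmul _ IQ)) IR) (intcmul _ IP)) (intcmul _ Ir)) IqP) IrQ,
      integral_add (intadd (intadd (intadd (intadd (intadd Ip (intcmul _ Iq))
        (intcmul _ IQ)) IR) (intcmul _ IP)) (intcmul _ Ir)) IqP,
      integral_add (intadd (intadd (intadd (intadd Ip (intcmul _ Iq))
        (intcmul _ IQ)) IR) (intcmul _ IP)) (intcmul _ Ir),
      integral_add (intadd (intadd (intadd Ip (intcmul _ Iq))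
        (intcmul _ IQ)) IR) (intcmul _ IP),
      integral_add (intadd (intadd Ip (intcmul _ Iq)) (intcmul _ IQ)) IR,
      integral_add (intadd Ip (intcmul _ Iq)) (intcmul _ IQ),
      integral_add Ip (intcmul _ Iq),
      integral_const_mul, integral_const_mul, integral_const_mul, integral_const_mul]
  -- numeric facts about the constant
  have hs2 : (0:ℝ) ≤ 2 := by norm_num
  have hsq : Real.sqrt 2 ^ 2 = 2 := Real.sq_sqrt hs2
  have hs0 : 0 ≤ Real.sqrt 2 := Real.sqrt_nonneg 2
  have hub : Real.sqrt 2 ≤ 2 := by nlinarith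
  have hlb : 1 ≤ Real.sqrt 2 := by nlinarith
  have hpos : 0 < Real.sqrt 2 := by linarith
  have hk : 1 - 1 / Real.sqrt 2 ≤ 1 / 2 := by
    have : (1:ℝ) / 2 ≤ 1 / Real.sqrt 2 := by
      rw [div_le_div_iff₀ (by norm_num) hpos]; linarith
    linarith
  -- main estimate with constant 1/2
  have hGH : 0 ≤ (∫ x : ℝ × ℝ, gradSq v1 v2 x) + ∫ x : ℝ × ℝ, hessSq v1 v2 x := by
    rw [S_grad, S_hess]; linarith
  have main : (∫ x : ℝ × ℝ, epsSq v1 v2 x) + (∫ x : ℝ × ℝ, gradEpsSq v1 v2 x)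
      ≥ (1 / 2) * ((∫ x : ℝ × ℝ, gradSq v1 v2 x) + ∫ x : ℝ × ℝ, hessSq v1 v2 x) := by
    rw [S_eps, S_grad, S_gradEps, S_hess]
    linarith [R1, R2, R3, N1, N3, N4]
  have hmul := mul_le_mul_of_nonneg_right hk hGH
  linarith
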